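/- Let f : ℝ^{d×n} → ℝ^{d×m} satisfy f(QX) = Q f(X) for every orthogonal matrix Q ∈ ℝ^{d×d}. Then there exists a function g from n×n matrices to n×m matrices such that f(X) = X · g(XᵀX) for all X ∈ ℝ^{d×n}. -/

import Mathlib

open Matrix

noncomputable section
namespace OrthEquivAux

variable {d n m : ℕ}

def Lm {d n : ℕ} (X : Matrix (Fin d) (Fin n) ℝ) :
    EuclideanSpace ℝ (Fin n) →ₗ[ℝ] EuclideanSpace ℝ (Fin d) :=
  Matrix.toEuclideanLin X

lemma Lm_apply (X : Matrix (Fin d) (Fin n) ℝ) (v : EuclideanSpace ℝ (Fin n)) (i : Fin d) :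
    Lm X v i = (X *ᵥ (v : Fin n → ℝ)) i := rfl

lemma inner_Lm_Lm (X : Matrix (Fin d) (Fin n) ℝ) (v w : EuclideanSpace ℝ (Fin n)) :
    inner ℝ (Lm X v) (Lm X w) = inner ℝ (Lm (Xᵀ * X) v) w := by
  simp only [PiLp.inner_apply, RCLike.inner_apply, starRingEnd_apply, star_trivial, Lm_apply]
  have h1 : ∑ i, (X *ᵥ (v : Fin n → ℝ)) i * (X *ᵥ (w : Fin n → ℝ)) i
      = (X *ᵥ (v : Fin n → ℝ)) ⬝ᵥ (X *ᵥ (w : Fin n → ℝ)) := rfl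
  have h2 : ∑ i, ((Xᵀ * X) *ᵥ (v : Fin n → ℝ)) i * (w : Fin n → ℝ) i
      = ((Xᵀ * X) *ᵥ (v : Fin n → ℝ)) ⬝ᵥ (w : Fin n → ℝ) := rfl
  rw [show (∑ i, (X *ᵥ (w : Fin n → ℝ)) i * (X *ᵥ (v : Fin n → ℝ)) i) = ∑ i, (X *ᵥ (v : Fin n → ℝ)) i * (X *ᵥ (w : Fin n → ℝ)) i from Finset.sum_congr rfl fun i _ => mul_comm _ _,
    show (∑ i, (w : Fin n → ℝ) i * ((Xᵀ * X) *ᵥ (v : Fin n → ℝ)) i) = ∑ i, ((Xᵀ * X) *ᵥ (v : Fin n → ℝ)) i * (w : Fin n → ℝ) i from Finset.sum_congr rfl fun i _ => mul_comm _ _]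
  rw [h1, h2, Matrix.dotProduct_mulVec, ← Matrix.mulVec_transpose, Matrix.mulVec_mulVec]

lemma norm_Lm_eq {X : Matrix (Fin d) (Fin n) ℝ} {Y : Matrix (Fin d) (Fin n) ℝ}
    (h : Xᵀ * X = Yᵀ * Y) (v : EuclideanSpace ℝ (Fin n)) : ‖Lm X v‖ = ‖Lm Y v‖ := by
  rw [← sq_eq_sq₀ (norm_nonneg _) (norm_nonneg _), ← real_inner_self_eq_norm_sq,
    ← real_inner_self_eq_norm_sq, inner_Lm_Lm, inner_Lm_Lm, h]

lemma euclidean_decomp {k : ℕ} (v : EuclideanSpace ℝ (Fin k)) :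
    v = ∑ j, v j • EuclideanSpace.single j (1 : ℝ) := by
  ext i
  have : (∑ j, v j • EuclideanSpace.single j (1 : ℝ)) i
      = ∑ j, (v j • EuclideanSpace.single j (1 : ℝ)) i :=
    by rw [WithLp.ofLp_sum]; exact Finset.sum_apply i Finset.univ _
  rw [this]
  simp [EuclideanSpace.single_apply]

lemma matrix_of_isometry (T : EuclideanSpace ℝ (Fin d) →ₗᵢ[ℝ] EuclideanSpace ℝ (Fin d)) :
    ∃ Q : Matrix (Fin d) (Fin d) ℝ, Qᵀ * Q = 1 ∧ ∀ v, Lm Q v = T v := by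
  refine ⟨Matrix.of fun i j => T (EuclideanSpace.single j (1 : ℝ)) i, ?_, ?_⟩
  · ext i j
    have h : ∑ k, T (EuclideanSpace.single i (1 : ℝ)) k * T (EuclideanSpace.single j (1 : ℝ)) k
        = inner ℝ (T (EuclideanSpace.single i (1:ℝ))) (T (EuclideanSpace.single j (1:ℝ))) := by
      rw [PiLp.inner_apply]
      simp [RCLike.inner_apply, mul_comm]
    simp only [Matrix.mul_apply, Matrix.transpose_apply, Matrix.of_apply, Matrix.one_apply]
    rw [h, T.inner_map_map, EuclideanSpace.inner_single_left]
    simp [EuclideanSpace.single_apply, eq_comm]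
  · intro v
    ext i
    have h2 : (∑ j, v j • T (EuclideanSpace.single j (1 : ℝ))) i
        = ∑ j, v j * T (EuclideanSpace.single j (1 : ℝ)) i := by
      rw [WithLp.ofLp_sum, Finset.sum_apply i Finset.univ _]; rfl
    calc (Lm (Matrix.of fun i j => T (EuclideanSpace.single j (1 : ℝ)) i) v) i
        = ∑ j, v j * T (EuclideanSpace.single j (1 : ℝ)) i := by
          rw [Lm_apply]; simp [Matrix.mulVec, dotProduct, mul_comm]
      _ = (∑ j, v j • T (EuclideanSpace.single j (1 : ℝ))) i := h2.symm
      _ = T v i := by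
          conv_rhs => rw [euclidean_decomp v]
          rw [map_sum]
          simp only [_root_.map_smul]

lemma Lm_injective {X Y : Matrix (Fin d) (Fin n) ℝ} (h : ∀ v, Lm X v = Lm Y v) : X = Y := by
  apply Matrix.toEuclideanLin.injective
  exact LinearMap.ext h

lemma Lm_mul {k : ℕ} (Q : Matrix (Fin d) (Fin d) ℝ) (X : Matrix (Fin d) (Fin k) ℝ)
    (v : EuclideanSpace ℝ (Fin k)) : Lm (Q * X) v = Lm Q (Lm X v) := by
  ext i
  rw [Lm_apply, Lm_apply, ← Matrix.mulVec_mulVec]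
  rfl

/-- Step 1: the value of `f` factors through the column space. -/
lemma exists_factor (f : Matrix (Fin d) (Fin n) ℝ → Matrix (Fin d) (Fin m) ℝ)
    (hf : ∀ (Q : Matrix (Fin d) (Fin d) ℝ) (X : Matrix (Fin d) (Fin n) ℝ),
      Qᵀ * Q = 1 → f (Q * X) = Q * f X)
    (X : Matrix (Fin d) (Fin n) ℝ) : ∃ A : Matrix (Fin n) (Fin m) ℝ, f X = X * A := by
  classical
  set U : Submodule ℝ (EuclideanSpace ℝ (Fin d)) := LinearMap.range (Lm X) with hU
  obtain ⟨Q, hQ, hQv⟩ := matrix_of_isometry (Submodule.reflection U).toLinearIsometry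
  have hQv' : ∀ v, Lm Q v = Submodule.reflection U v := hQv
  have hQX : Q * X = X := by
    apply Lm_injective
    intro v
    rw [Lm_mul, hQv']
    exact Submodule.reflection_mem_subspace_eq_self (LinearMap.mem_range_self _ v)
  have hfix : f X = Q * f X := by
    conv_lhs => rw [← hQX]
    exact hf Q X hQ
  have hcol : ∀ u : EuclideanSpace ℝ (Fin m), Lm (f X) u ∈ U := by
    intro u
    have h3 : Lm (f X) u = Submodule.reflection U (Lm (f X) u) := by
      conv_lhs => rw [hfix]
      rw [Lm_mul, hQv']
    exact (Submodule.reflection_eq_self_iff _).mp h3.symm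
  choose w hw using fun j : Fin m => hcol (EuclideanSpace.single j (1 : ℝ))
  refine ⟨Matrix.of fun i j => w j i, ?_⟩
  ext i j
  have key : (Lm X (w j)) i = (Lm (f X) (EuclideanSpace.single j (1:ℝ))) i := by rw [hw j]
  rw [Lm_apply, Lm_apply] at key
  have hr : (f X *ᵥ (EuclideanSpace.single j (1:ℝ) : Fin m → ℝ)) i = f X i j := by
    simp [Matrix.mulVec, dotProduct, EuclideanSpace.single_apply]
  have hl : (X *ᵥ (w j : Fin n → ℝ)) i = (X * Matrix.of fun i j => w j i) i j := by
    simp [Matrix.mulVec, dotProduct, Matrix.mul_apply]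
  rw [← hr, ← key, hl]

/-- Step 2: equal Gram matrices differ by an orthogonal transformation. -/
lemma exists_orth {X Y : Matrix (Fin d) (Fin n) ℝ} (h : Xᵀ * X = Yᵀ * Y) :
    ∃ Q : Matrix (Fin d) (Fin d) ℝ, Qᵀ * Q = 1 ∧ Y = Q * X := by
  have hker : LinearMap.ker (Lm X) ≤ LinearMap.ker (Lm Y) := by
    intro v hv
    rw [LinearMap.mem_ker] at hv ⊢
    have h1 := norm_Lm_eq h v
    rw [hv, norm_zero] at h1
    exact norm_eq_zero.mp h1.symm
  set ψ := Submodule.liftQ (LinearMap.ker (Lm X)) (Lm Y) hker with hψ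
  set e := (Lm X).quotKerEquivRange with he
  set L0 : LinearMap.range (Lm X) →ₗ[ℝ] EuclideanSpace ℝ (Fin d) :=
    ψ ∘ₗ (e.symm : LinearMap.range (Lm X) →ₗ[ℝ] _) with hL0def
  have hL0 : ∀ v : EuclideanSpace ℝ (Fin n),
      L0 ⟨Lm X v, LinearMap.mem_range_self _ v⟩ = Lm Y v := by
    intro v
    have hsymm : e.symm ⟨Lm X v, LinearMap.mem_range_self _ v⟩
        = (LinearMap.ker (Lm X)).mkQ v :=
      (Lm X).quotKerEquivRange_symm_apply_image v (LinearMap.mem_range_self _ v)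
    simp only [hL0def, LinearMap.comp_apply, LinearEquiv.coe_coe, hsymm]
    exact Submodule.liftQ_apply _ _ _
  have hnorm : ∀ u : LinearMap.range (Lm X), ‖L0 u‖ = ‖u‖ := by
    rintro ⟨u, v, rfl⟩
    rw [hL0 v]
    have : ‖(⟨Lm X v, LinearMap.mem_range_self _ v⟩ : LinearMap.range (Lm X))‖
        = ‖Lm X v‖ := rfl
    rw [this, ← norm_Lm_eq h v]
  set L : LinearMap.range (Lm X) →ₗᵢ[ℝ] EuclideanSpace ℝ (Fin d) := ⟨L0, hnorm⟩ with hL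
  obtain ⟨Q, hQ, hQv⟩ := matrix_of_isometry L.extend
  refine ⟨Q, hQ, ?_⟩
  apply Lm_injective
  intro v
  rw [Lm_mul, hQv]
  have hext := L.extend_apply ⟨Lm X v, LinearMap.mem_range_self _ v⟩
  rw [hext]
  show Lm Y v = L0 _
  rw [hL0 v]

end OrthEquivAux

end

/-- Proposition 1: an orthogonal equivariant `f : ℝ^{d×n} → ℝ^{d×m}` can be written
as `f(X) = X g(XᵀX)` for some function `g`. -/
theorem orth_equivariant_representation (d n m : ℕ) (hd : 0 < d) (hn : 0 < n) (hm : 0 < m)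
    (f : Matrix (Fin d) (Fin n) ℝ → Matrix (Fin d) (Fin m) ℝ)
    (hf : ∀ (Q : Matrix (Fin d) (Fin d) ℝ) (X : Matrix (Fin d) (Fin n) ℝ),
      Qᵀ * Q = 1 → f (Q * X) = Q * f X) :
    ∃ g : Matrix (Fin n) (Fin n) ℝ → Matrix (Fin n) (Fin m) ℝ,
      ∀ X : Matrix (Fin d) (Fin n) ℝ, f X = X * g (Xᵀ * X) := by
  classical
  refine ⟨fun S =>
    if hS : ∃ X : Matrix (Fin d) (Fin n) ℝ, Xᵀ * X = S then
      Classical.choose (OrthEquivAux.exists_factor f hf (Classical.choose hS))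
    else 0, ?_⟩
  intro X
  have hS : ∃ X' : Matrix (Fin d) (Fin n) ℝ, X'ᵀ * X' = Xᵀ * X := ⟨X, rfl⟩
  simp only [dif_pos hS]
  set X₀ := Classical.choose hS with hX₀def
  have hX₀ : X₀ᵀ * X₀ = Xᵀ * X := Classical.choose_spec hS
  set A := Classical.choose (OrthEquivAux.exists_factor f hf X₀) with hAdef
  have hA : f X₀ = X₀ * A := Classical.choose_spec (OrthEquivAux.exists_factor f hf X₀)
  obtain ⟨Q, hQ, hQX⟩ := OrthEquivAux.exists_orth hX₀
  rw [hQX, hf Q X₀ hQ, hA, ← Matrix.mul_assoc]
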